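/- Monotonicity of stability regions in prediction ability: for 0 ≤ θ_a < θ_b ≤ 1, the stability region D_{θ_a} is a subset of D_{θ_b}, where D_θ = {c : c = θ·Σ_e p^e·s^e·g^e + (1−θ)·S̄·g for some g^e, g ∈ G}, provided G is convex, Σ_e p^e = 1 with p^e ≥ 0, and S̄ = Σ_e p^e·s^e. -/
import Mathlib

open Matrix

/-- Monotonicity of stability regions in prediction ability: for `0 ≤ θa < θb ≤ 1`,
`D_{θa} ⊆ D_{θb}`, where
`D_θ = {c : c = θ·Σ_e p^e·s^e·g^e + (1−θ)·S̄·g, g^e, g ∈ G}`, with `G` convex,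
`p` a probability vector, the `s^e` nonnegative diagonal matrices, and
`S̄ = Σ_e p^e·s^e`. -/
theorem stability_region_monotone_in_theta {n : ℕ} {E : Type} [Fintype E]
    (p : E → ℝ) (hp : ∀ e, 0 ≤ p e) (hpsum : ∑ e, p e = 1)
    (s : E → Matrix (Fin n) (Fin n) ℝ)
    (hsdiag : ∀ e i j, i ≠ j → s e i j = 0)
    (hsnn : ∀ e i, 0 ≤ s e i i)
    (G : Set (Fin n → ℝ)) (hG : Convex ℝ G)
    (θa θb : ℝ) (h0 : 0 ≤ θa) (hab : θa < θb) (h1 : θb ≤ 1) :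
    {c : Fin n → ℝ | ∃ (ge : E → Fin n → ℝ) (g : Fin n → ℝ),
        (∀ e, ge e ∈ G) ∧ g ∈ G ∧
        c = θa • ∑ e, p e • (s e *ᵥ ge e) + (1 - θa) • ((∑ e, p e • s e) *ᵥ g)}
      ⊆
    {c : Fin n → ℝ | ∃ (ge : E → Fin n → ℝ) (g : Fin n → ℝ),
        (∀ e, ge e ∈ G) ∧ g ∈ G ∧
        c = θb • ∑ e, p e • (s e *ᵥ ge e) + (1 - θb) • ((∑ e, p e • s e) *ᵥ g)} := by
  rintro c ⟨ge, g, hge, hg, rfl⟩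
  have hbpos : (0:ℝ) < θb := lt_of_le_of_lt h0 hab
  set t : ℝ := θa / θb with ht
  have ht0 : 0 ≤ t := div_nonneg h0 hbpos.le
  have ht1 : t ≤ 1 := (div_le_one hbpos).2 hab.le
  refine ⟨fun e => t • ge e + (1 - t) • g, g,
    fun e => hG (hge e) hg ht0 (by linarith) (by ring), hg, ?_⟩
  have hSg : (∑ e, p e • s e) *ᵥ g = ∑ e, p e • (s e *ᵥ g) := by
    ext i
    simp only [Matrix.mulVec, dotProduct, Finset.sum_apply, Matrix.sum_apply,
      Matrix.smul_apply, Pi.smul_apply, Finset.sum_mul, smul_eq_mul, mul_assoc]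
    rw [Finset.sum_comm]
    simp [Finset.mul_sum]
  have hkey : ∀ e, p e • (s e *ᵥ (t • ge e + (1 - t) • g))
      = t • (p e • (s e *ᵥ ge e)) + (1 - t) • (p e • (s e *ᵥ g)) := by
    intro e
    rw [Matrix.mulVec_add, Matrix.mulVec_smul, Matrix.mulVec_smul, smul_add]
    rw [smul_comm (p e) t, smul_comm (p e) (1 - t)]
  have hsum : ∑ e, p e • (s e *ᵥ (t • ge e + (1 - t) • g))
      = t • (∑ e, p e • (s e *ᵥ ge e)) + (1 - t) • ((∑ e, p e • s e) *ᵥ g) := by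
    rw [hSg, Finset.smul_sum, Finset.smul_sum, ← Finset.sum_add_distrib]
    exact Finset.sum_congr rfl fun e _ => hkey e
  rw [hsum, smul_add, smul_smul, smul_smul, add_assoc, ← add_smul]
  have h1' : θb * t = θa := mul_div_cancel₀ _ hbpos.ne'
  have h2' : θb * (1 - t) + (1 - θb) = 1 - θa := by rw [mul_sub, h1']; ring
  rw [h1', h2']
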